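/- Let (X̄, d) be a complete separable metric space with base point x₀ and p ≥ 1. Let ℓ : X̄ × X̄ → ℝ be continuous and satisfy |ℓ(x, y)| ≤ C(1 + d(x, x₀)^p + d(y, x₀)^p) for some C > 0 and all x, y. Assume the expected-loss functional (P, Q) ↦ ∫∫ ℓ(x, y) dP(x) dQ(y) on 𝒫_p(X̄) × 𝒫_p(X̄) is sequentially jointly continuous with respect to W_p-convergence. Let μ̄ ∈ 𝒫_p(X̄), define the climatological risk R(c) := ∫ ℓ(c, y) dμ̄(y), and assume R has a unique global minimizer c* ∈ X̄. Let E be a measurable space with probability measure μ̄' equal to the law of initial conditions (taken as X̄ with law μ̄), and for each m ∈ ℕ let Q_m and P_m be Markov kernels from X̄ to X̄ with Q_m(x), P_m(x) ∈ 𝒫_p(X̄), and let P_∞ be a Markov kernel with P_∞(x) ∈ 𝒫_p(X̄). Assume: for μ̄-almost every x, Q_m(x) → μ̄ in W_p and P_m(x) → P_∞(x) in W_p as m → ∞; and the functions g_m(x) := ∫∫ ℓ(ỹ, ȳ) dP_m(x)(ỹ) dQ_m(x)(ȳ) are uniformly integrable with respect to μ̄. Then lim_{m→∞} ∫ g_m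 dμ̄ = ∫ (∫ R(ỹ) dP_∞(x)(ỹ)) dμ̄(x) ≥ R(c*), and equality with R(c*) holds if and only if P_∞(x) = δ_{c*} for μ̄-almost every x. (Supplementary Proposition 1: degeneracy of pointwise losses at long lead times.) -/

import Mathlib

open MeasureTheory ProbabilityTheory Filter Topology
open scoped BoundedContinuousFunction ENNReal NNReal

/-- `ν ∈ 𝒫_p(X)`: a Borel probability measure with finite `p`-th moment about the
base point `x₀`. -/
def MemPp {X : Type*} [MetricSpace X] [MeasurableSpace X]
    (p : ℝ) (x₀ : X) (ν : Measure X) : Prop :=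
  IsProbabilityMeasure ν ∧ Integrable (fun x => dist x x₀ ^ p) ν

/-- Weak convergence of measures: convergence of integrals of all bounded
continuous functions. -/
def WeakTendsto {X : Type*} [MetricSpace X] [MeasurableSpace X]
    (νs : ℕ → Measure X) (ν : Measure X) : Prop :=
  ∀ f : X →ᵇ ℝ, Tendsto (fun m => ∫ x, f x ∂(νs m)) atTop (𝓝 (∫ x, f x ∂ν))

/-- Convergence in the Wasserstein-`p` sense: weak convergence together with
convergence of `p`-th moments about the base point `x₀`. -/
def WpTendsto {X : Type*} [MetricSpace X] [MeasurableSpace X]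
    (p : ℝ) (x₀ : X) (νs : ℕ → Measure X) (ν : Measure X) : Prop :=
  WeakTendsto νs ν ∧
    Tendsto (fun m => ∫ x, dist x x₀ ^ p ∂(νs m)) atTop (𝓝 (∫ x, dist x x₀ ^ p ∂ν))

/-- A probability measure giving full mass to a singleton is the Dirac measure. -/
lemma eq_dirac_of_compl_null {X : Type*} [MeasurableSpace X] [MeasurableSingletonClass X]
    {ν : Measure X} [IsProbabilityMeasure ν] {a : X} (h : ν {a}ᶜ = 0) :
    ν = Measure.dirac a := by
  ext s hs
  rw [Measure.dirac_apply' a hs]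
  by_cases ha : a ∈ s
  · have h0 : ν sᶜ = 0 :=
      measure_mono_null (Set.compl_subset_compl.mpr (Set.singleton_subset_iff.mpr ha)) h
    rw [(prob_compl_eq_zero_iff hs).mp h0, Set.indicator_of_mem ha, Pi.one_apply]
  · have hsub : s ⊆ {a}ᶜ := fun x hx => by
      simp only [Set.mem_compl_iff, Set.mem_singleton_iff]
      rintro rfl; exact ha hx
    rw [measure_mono_null hsub h, Set.indicator_of_notMem ha]

/-- Vitali convergence theorem in the form needed below: a sequence of integrable
functions that converges a.e. and is uniformly integrable (in the tail-integral
sense) has an integrable limit and the integrals converge. -/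
lemma aux_vitali {X : Type*} [MeasurableSpace X] (μ : Measure X) [IsProbabilityMeasure μ]
    (g : ℕ → X → ℝ) (hgint : ∀ m, Integrable (g m) μ)
    (hUI : ∀ ε > 0, ∃ K > (0 : ℝ), ∀ m, ∫ x in {x | K ≤ |g m x|}, |g m x| ∂μ ≤ ε)
    (h : X → ℝ) (hae : ∀ᵐ x ∂μ, Tendsto (fun m => g m x) atTop (𝓝 (h x))) :
    Integrable h μ ∧ Tendsto (fun m => ∫ x, g m x ∂μ) atTop (𝓝 (∫ x, h x ∂μ)) := by
  classical
  set G : ℕ → X → ℝ := fun m => (hgint m).1.mk (g m) with hG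
  have hGsm : ∀ m, StronglyMeasurable (G m) := fun m => (hgint m).1.stronglyMeasurable_mk
  have hGae : ∀ m, g m =ᵐ[μ] G m := fun m => (hgint m).1.ae_eq_mk
  have hGint : ∀ m, Integrable (G m) μ := fun m => (hgint m).congr (hGae m)
  -- key truncation bound
  have hkey : ∀ (K : ℝ), 0 ≤ K → ∀ m (s : Set X), MeasurableSet s →
      ∫ x in s, |G m x| ∂μ ≤ K * (μ s).toReal + ∫ x in {x | K ≤ |G m x|}, |G m x| ∂μ := by
    intro K hK m s hs
    set A := {x | K ≤ |G m x|} with hA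
    have hAmeas : MeasurableSet A := measurableSet_le measurable_const (hGsm m).measurable.abs
    have hind : Integrable (A.indicator fun x => |G m x|) μ := ((hGint m).abs).indicator hAmeas
    have hptw : ∀ x, |G m x| ≤ K + A.indicator (fun x => |G m x|) x := by
      intro x
      by_cases hx : x ∈ A
      · rw [Set.indicator_of_mem hx]; linarith
      · rw [Set.indicator_of_notMem hx]
        have : ¬ K ≤ |G m x| := hx
        linarith [not_le.mp this]
    calc ∫ x in s, |G m x| ∂μ
        ≤ ∫ x in s, (K + A.indicator (fun x => |G m x|) x) ∂μ := by
          refine integral_mono ((hGint m).abs.restrict) ?_ hptw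
          exact (integrable_const K).add (hind.restrict)
      _ = K * (μ s).toReal + ∫ x in s, A.indicator (fun x => |G m x|) x ∂μ := by
          rw [integral_add (integrable_const K) (hind.restrict), setIntegral_const,
            smul_eq_mul, mul_comm, measureReal_def]
      _ ≤ K * (μ s).toReal + ∫ x, A.indicator (fun x => |G m x|) x ∂μ := by
          refine add_le_add_right (setIntegral_le_integral hind
            (ae_of_all _ fun x => Set.indicator_nonneg (fun y _ => abs_nonneg _) x)) _
      _ = K * (μ s).toReal + ∫ x in A, |G m x| ∂μ := by rw [integral_indicator hAmeas]
  -- transfer UI to G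
  have hUIG : ∀ ε > (0 : ℝ), ∃ K > (0 : ℝ), ∀ m,
      ∫ x in {x | K ≤ |G m x|}, |G m x| ∂μ ≤ ε := by
    intro ε hε
    obtain ⟨K, hK, hKm⟩ := hUI ε hε
    refine ⟨K, hK, fun m => ?_⟩
    have h1 : {x | K ≤ |g m x|} =ᵐ[μ] {x | K ≤ |G m x|} := by
      filter_upwards [hGae m] with x hx
      show (K ≤ |g m x|) = (K ≤ |G m x|)
      rw [hx]
    calc ∫ x in {x | K ≤ |G m x|}, |G m x| ∂μ
        = ∫ x in {x | K ≤ |g m x|}, |G m x| ∂μ := by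
          rw [Measure.restrict_congr_set h1]
      _ = ∫ x in {x | K ≤ |g m x|}, |g m x| ∂μ := by
          refine integral_congr_ae (ae_restrict_of_ae ?_)
          filter_upwards [hGae m] with x hx using by rw [hx]
      _ ≤ ε := hKm m
  -- uniform L1 bound
  obtain ⟨K₁, hK₁, hK₁m⟩ := hUIG 1 one_pos
  have hL1bdd : ∀ m, ∫ x, |G m x| ∂μ ≤ K₁ + 1 := by
    intro m
    have := hkey K₁ hK₁.le m Set.univ MeasurableSet.univ
    rw [setIntegral_univ] at this
    calc ∫ x, |G m x| ∂μ
        ≤ K₁ * (μ Set.univ).toReal + ∫ x in {x | K₁ ≤ |G m x|}, |G m x| ∂μ := this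
      _ ≤ K₁ * 1 + 1 := by
          gcongr
          · simp [measure_univ]
          · exact hK₁m m
      _ = K₁ + 1 := by ring
  -- measurability and integrability of the limit
  have hhmeas : AEStronglyMeasurable h μ :=
    aestronglyMeasurable_of_tendsto_ae atTop (fun m => (hgint m).1) hae
  have hGh : ∀ᵐ x ∂μ, Tendsto (fun m => G m x) atTop (𝓝 (h x)) := by
    have hallae : ∀ᵐ x ∂μ, ∀ m, g m x = G m x := ae_all_iff.2 hGae
    filter_upwards [hae, hallae] with x h1 h2
    have : (fun m => G m x) = fun m => g m x := funext fun m => (h2 m).symm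
    rw [this]; exact h1
  have hInth : Integrable h μ := by
    refine ⟨hhmeas, ?_⟩
    rw [hasFiniteIntegral_def]
    have hle : ∀ᵐ x ∂μ, (‖h x‖₊ : ℝ≥0∞) ≤ atTop.liminf fun m => (‖G m x‖₊ : ℝ≥0∞) := by
      filter_upwards [hGh] with x hx
      have := (ENNReal.tendsto_coe.2 hx.nnnorm).liminf_eq
      exact le_of_eq this.symm
    calc ∫⁻ x, (‖h x‖₊ : ℝ≥0∞) ∂μ
        ≤ ∫⁻ x, atTop.liminf (fun m => (‖G m x‖₊ : ℝ≥0∞)) ∂μ := lintegral_mono_ae hle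
      _ ≤ atTop.liminf fun m => ∫⁻ x, (‖G m x‖₊ : ℝ≥0∞) ∂μ :=
          lintegral_liminf_le fun m => (hGsm m).measurable.nnnorm.coe_nnreal_ennreal
      _ ≤ ENNReal.ofReal (K₁ + 1) := by
          refine liminf_le_of_frequently_le' (Filter.Frequently.of_forall fun m => ?_)
          rw [show (∫⁻ x, (‖G m x‖₊ : ℝ≥0∞) ∂μ) = ∫⁻ x, ‖G m x‖ₑ ∂μ from rfl,
            ← ofReal_integral_norm_eq_lintegral_enorm (hGint m)]
          exact ENNReal.ofReal_le_ofReal (by simpa [Real.norm_eq_abs] using hL1bdd m)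
      _ < ⊤ := ENNReal.ofReal_lt_top
  -- uniform integrability in Mathlib's sense
  have hUIG2 : UnifIntegrable G 1 μ := by
    intro ε hε
    obtain ⟨K, hK, hKm⟩ := hUIG (ε / 2) (by positivity)
    refine ⟨ε / (2 * K), by positivity, fun i s hs hμs => ?_⟩
    have hsint : ∫ x in s, |G i x| ∂μ ≤ ε := by
      have h1 := hkey K hK.le i s hs
      have h2 : (μ s).toReal ≤ ε / (2 * K) :=
        ENNReal.toReal_le_of_le_ofReal (by positivity) hμs
      calc ∫ x in s, |G i x| ∂μ
          ≤ K * (μ s).toReal + ∫ x in {x | K ≤ |G i x|}, |G i x| ∂μ := h1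
        _ ≤ K * (ε / (2 * K)) + ε / 2 := by
            gcongr
            exact hKm i
        _ = ε := by field_simp; ring
    rw [eLpNorm_indicator_eq_eLpNorm_restrict hs, eLpNorm_one_eq_lintegral_enorm,
      ← ofReal_integral_norm_eq_lintegral_enorm ((hGint i).restrict)]
    exact ENNReal.ofReal_le_ofReal (by simpa [Real.norm_eq_abs] using hsint)
  have hUIg : UnifIntegrable g 1 μ := hUIG2.ae_eq fun m => (hGae m).symm
  have hL1 : Tendsto (fun n => eLpNorm (g n - h) 1 μ) atTop (𝓝 0) :=
    tendsto_Lp_finite_of_tendsto_ae le_rfl ENNReal.one_ne_top (fun n => (hgint n).1)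
      (memLp_one_iff_integrable.2 hInth) hUIg hae
  exact ⟨hInth, tendsto_integral_of_L1' h hInth.1 (Eventually.of_forall hgint) hL1⟩

/-- Supplementary Proposition 1: degeneracy of pointwise losses
at long lead times. Under `W_p` decorrelation of the true conditional laws toward
the invariant measure `μ̄`, `W_p` convergence of the model predictive laws, joint
`W_p` continuity of the expected-loss functional, and uniform integrability of the
conditional expected losses `g_m`, the time-`m` expected pointwise losses converge
to `∫∫ R dP_∞(x) dμ̄(x) ≥ R(c*)`, with equality iff `P_∞(x) = δ_{c*}` for
`μ̄`-a.e. `x`. -/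
theorem pointwise_loss_long_lead_degeneracy
    {X : Type*} [MetricSpace X] [CompleteSpace X] [TopologicalSpace.SeparableSpace X]
    [MeasurableSpace X] [BorelSpace X]
    (x₀ : X) (p : ℝ) (hp : 1 ≤ p)
    (ℓ : X → X → ℝ) (hℓcont : Continuous (Function.uncurry ℓ))
    (C : ℝ) (hC : 0 < C)
    (hgrowth : ∀ x y, |ℓ x y| ≤ C * (1 + dist x x₀ ^ p + dist y x₀ ^ p))
    (hcont : ∀ (Ps Qs : ℕ → Measure X) (P Q : Measure X),
      (∀ m, MemPp p x₀ (Ps m)) → (∀ m, MemPp p x₀ (Qs m)) →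
      MemPp p x₀ P → MemPp p x₀ Q →
      WpTendsto p x₀ Ps P → WpTendsto p x₀ Qs Q →
      Tendsto (fun m => ∫ y, ∫ x, ℓ x y ∂(Ps m) ∂(Qs m)) atTop
        (𝓝 (∫ y, ∫ x, ℓ x y ∂P ∂Q)))
    (μbar : Measure X) (hμbar : MemPp p x₀ μbar)
    (Q P : ℕ → Kernel X X)
    (hQmarkov : ∀ m, IsMarkovKernel (Q m)) (hPmarkov : ∀ m, IsMarkovKernel (P m))
    (Pinf : Kernel X X) (hPinfmarkov : IsMarkovKernel Pinf)
    (hQmom : ∀ m x, MemPp p x₀ (Q m x)) (hPmom : ∀ m x, MemPp p x₀ (P m x))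
    (hPinfmom : ∀ x, MemPp p x₀ (Pinf x))
    (hQconv : ∀ᵐ x ∂μbar, WpTendsto p x₀ (fun m => Q m x) μbar)
    (hPconv : ∀ᵐ x ∂μbar, WpTendsto p x₀ (fun m => P m x) (Pinf x))
    (g : ℕ → X → ℝ)
    (hg : ∀ m x, g m x = ∫ yb, ∫ yt, ℓ yt yb ∂(P m x) ∂(Q m x))
    (hgint : ∀ m, Integrable (g m) μbar)
    (hUI : ∀ ε > 0, ∃ K > (0 : ℝ), ∀ m, ∫ x in {x | K ≤ |g m x|}, |g m x| ∂μbar ≤ ε)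
    (R : X → ℝ) (hR : ∀ c, R c = ∫ y, ℓ c y ∂μbar)
    (cstar : X) (hmin : ∀ c ≠ cstar, R cstar < R c) :
    Tendsto (fun m => ∫ x, g m x ∂μbar) atTop
        (𝓝 (∫ x, ∫ y, R y ∂(Pinf x) ∂μbar)) ∧
    R cstar ≤ ∫ x, ∫ y, R y ∂(Pinf x) ∂μbar ∧
    ((∫ x, ∫ y, R y ∂(Pinf x) ∂μbar = R cstar) ↔
      ∀ᵐ x ∂μbar, Pinf x = Measure.dirac cstar) := by
  classical
  haveI : SecondCountableTopology X := UniformSpace.secondCountable_of_separable X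
  haveI := hμbar.1
  -- integrability of ℓ on products of measures with finite p-th moments
  have hprodint : ∀ ν κ : Measure X, MemPp p x₀ ν → MemPp p x₀ κ →
      Integrable (Function.uncurry ℓ) (ν.prod κ) := by
    intro ν κ hν hκ
    haveI := hν.1; haveI := hκ.1
    have hmc : Continuous fun x : X => dist x x₀ ^ p :=
      (continuous_id.dist continuous_const).rpow_const fun _ => Or.inr (le_trans zero_le_one hp)
    have h1 : Integrable (fun z : X × X => dist z.1 x₀ ^ p) (ν.prod κ) := by
      have hmap : (ν.prod κ).map Prod.fst = ν := by
        rw [Measure.map_fst_prod]; simp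
      have := (integrable_map_measure hmc.aestronglyMeasurable
        measurable_fst.aemeasurable).mp (by rw [hmap]; exact hν.2)
      exact this
    have h2 : Integrable (fun z : X × X => dist z.2 x₀ ^ p) (ν.prod κ) := by
      have hmap : (ν.prod κ).map Prod.snd = κ := by
        rw [Measure.map_snd_prod]; simp
      have := (integrable_map_measure hmc.aestronglyMeasurable
        measurable_snd.aemeasurable).mp (by rw [hmap]; exact hκ.2)
      exact this
    have hB : Integrable
        (fun z : X × X => C * (1 + dist z.1 x₀ ^ p + dist z.2 x₀ ^ p)) (ν.prod κ) :=
      (((integrable_const (1 : ℝ)).add h1).add h2).const_mul C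
    refine Integrable.mono' hB hℓcont.stronglyMeasurable.aestronglyMeasurable
      (ae_of_all _ fun z => ?_)
    simpa [Function.uncurry, Real.norm_eq_abs] using hgrowth z.1 z.2
  -- Fubini swap
  have hswap : ∀ ν κ : Measure X, MemPp p x₀ ν → MemPp p x₀ κ →
      (∫ a, ∫ b, ℓ a b ∂κ ∂ν) = ∫ b, ∫ a, ℓ a b ∂ν ∂κ := by
    intro ν κ hν hκ
    haveI := hν.1; haveI := hκ.1
    exact integral_integral_swap (hprodint ν κ hν hκ)
  -- measurability and integrability of R
  have hRfun : R = fun c => ∫ y, Function.uncurry ℓ (c, y) ∂μbar := funext fun c => hR c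
  have hRsm : StronglyMeasurable R := by
    rw [hRfun]; exact hℓcont.stronglyMeasurable.integral_prod_right'
  set M := ∫ y, dist y x₀ ^ p ∂μbar with hM
  have hRbound : ∀ c, ‖R c‖ ≤ C * (1 + M) + C * dist c x₀ ^ p := by
    intro c
    rw [hR c]
    have hb : Integrable (fun y => C * (1 + dist c x₀ ^ p) + C * dist y x₀ ^ p) μbar :=
      (integrable_const _).add (hμbar.2.const_mul C)
    have h1 : ‖∫ y, ℓ c y ∂μbar‖
        ≤ ∫ y, (C * (1 + dist c x₀ ^ p) + C * dist y x₀ ^ p) ∂μbar := by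
      refine norm_integral_le_of_norm_le hb (ae_of_all _ fun y => ?_)
      rw [Real.norm_eq_abs]
      calc |ℓ c y| ≤ C * (1 + dist c x₀ ^ p + dist y x₀ ^ p) := hgrowth c y
        _ = C * (1 + dist c x₀ ^ p) + C * dist y x₀ ^ p := by ring
    have h2 : ∫ y, (C * (1 + dist c x₀ ^ p) + C * dist y x₀ ^ p) ∂μbar
        = C * (1 + dist c x₀ ^ p) + C * M := by
      rw [integral_add (integrable_const _) (hμbar.2.const_mul C), integral_const,
        integral_const_mul, probReal_univ]
      simp [hM]
    rw [h2] at h1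
    nlinarith [h1]
  have hRint : ∀ ν : Measure X, MemPp p x₀ ν → Integrable R ν := by
    intro ν hν
    haveI := hν.1
    exact Integrable.mono' ((integrable_const (C * (1 + M))).add (hν.2.const_mul C))
      hRsm.aestronglyMeasurable (ae_of_all _ hRbound)
  have hRlow : ∀ y, R cstar ≤ R y := by
    intro y
    by_cases hy : y = cstar
    · rw [hy]
    · exact (hmin y hy).le
  set h : X → ℝ := fun x => ∫ y, R y ∂(Pinf x) with hh
  have hhx : ∀ x, h x = ∫ yb, ∫ yt, ℓ yt yb ∂(Pinf x) ∂μbar := by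
    intro x
    have h1 : h x = ∫ a, ∫ b, ℓ a b ∂μbar ∂(Pinf x) := by
      simp only [hh, hR]
    rw [h1]
    exact hswap (Pinf x) μbar (hPinfmom x) hμbar
  -- a.e. convergence of g m to h
  have hae : ∀ᵐ x ∂μbar, Tendsto (fun m => g m x) atTop (𝓝 (h x)) := by
    filter_upwards [hQconv, hPconv] with x hQx hPx
    have hc := hcont (fun m => P m x) (fun m => Q m x) (Pinf x) μbar
      (fun m => hPmom m x) (fun m => hQmom m x) (hPinfmom x) hμbar hPx hQx
    have hgm : (fun m => g m x) = fun m => ∫ yb, ∫ yt, ℓ yt yb ∂(P m x) ∂(Q m x) :=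
      funext fun m => hg m x
    rw [hgm, hhx x]
    exact hc
  obtain ⟨hInth, hconv⟩ := aux_vitali μbar g hgint hUI h hae
  have hhlow : ∀ x, R cstar ≤ h x := by
    intro x
    haveI := (hPinfmom x).1
    calc R cstar = ∫ _, R cstar ∂(Pinf x) := by rw [integral_const]; simp
      _ ≤ ∫ y, R y ∂(Pinf x) :=
        integral_mono (integrable_const _) (hRint _ (hPinfmom x)) hRlow
  refine ⟨hconv, ?_, ?_⟩
  · calc R cstar = ∫ _, R cstar ∂μbar := by rw [integral_const]; simp
      _ ≤ ∫ x, h x ∂μbar := integral_mono (integrable_const _) hInth hhlow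
  · constructor
    · intro heq
      have hz : ∫ x, (h x - R cstar) ∂μbar = 0 := by
        rw [integral_sub hInth (integrable_const _), heq, integral_const]
        simp
      have h0 : (fun x => h x - R cstar) =ᵐ[μbar] 0 :=
        (integral_eq_zero_iff_of_nonneg (fun x => sub_nonneg.2 (hhlow x))
          (hInth.sub (integrable_const _))).mp hz
      filter_upwards [h0] with x hx
      have hxx : (∫ y, R y ∂(Pinf x)) = R cstar := by
        have : h x - R cstar = 0 := hx
        have h2 : h x = R cstar := by linarith
        exact h2
      haveI := (hPinfmom x).1
      have hz2 : ∫ y, (R y - R cstar) ∂(Pinf x) = 0 := by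
        rw [integral_sub (hRint _ (hPinfmom x)) (integrable_const _), hxx, integral_const]
        simp
      have hy0 : (fun y => R y - R cstar) =ᵐ[Pinf x] 0 :=
        (integral_eq_zero_iff_of_nonneg (fun y => sub_nonneg.2 (hRlow y))
          ((hRint _ (hPinfmom x)).sub (integrable_const _))).mp hz2
      have hyae : ∀ᵐ y ∂(Pinf x), y = cstar := by
        filter_upwards [hy0] with y hy
        by_contra hne
        have h1 := hmin y hne
        have h2 : R y - R cstar = 0 := hy
        linarith
      have hnull : (Pinf x) {cstar}ᶜ = 0 := by
        have h1 := ae_iff.mp hyae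
        simpa [Set.compl_singleton_eq] using h1
      exact eq_dirac_of_compl_null hnull
    · intro hd
      have hconst : h =ᵐ[μbar] fun _ => R cstar := by
        filter_upwards [hd] with x hx
        show h x = R cstar
        calc h x = ∫ y, R y ∂(Pinf x) := rfl
          _ = ∫ y, R y ∂(Measure.dirac cstar) := by rw [hx]
          _ = R cstar := integral_dirac R cstar
      rw [integral_congr_ae hconst, integral_const]
      simp
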